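/- arXiv:1912.03646 — 4 statements merged into one kernel-verified Lean document; each statement's English description precedes it below -/
import Mathlib

section
/- Let ρ and σ be density matrices on Fin n and let ε ∈ [0,1] satisfy √ε < √F(ρ,σ). Then D_h^ε(ρ‖σ) ≤ −2 log₂ (√F(ρ,σ) − √ε). Equivalently, every test Λ with Re Tr[Λ·ρ] ≥ 1 − ε satisfies Re Tr[Λ·σ] ≥ (√F(ρ,σ) − √ε)². -/
open Matrix Kronecker
open scoped ComplexOrder

open scoped Classical in
noncomputable def matSqrt {n : Type*} [Fintype n] [DecidableEq n] (A : Matrix n n ℂ) :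
    Matrix n n ℂ :=
  if h : A.PosSemidef then
    (h.1.eigenvectorUnitary : Matrix n n ℂ) *
      Matrix.diagonal (fun i => ((Real.sqrt (h.1.eigenvalues i) : ℝ) : ℂ)) *
      (star h.1.eigenvectorUnitary : Matrix n n ℂ)
  else 0

noncomputable def rootFidelity {n : Type*} [Fintype n] [DecidableEq n]
    (ρ σ : Matrix n n ℂ) : ℝ :=
  (matSqrt (matSqrt σ * ρ * matSqrt σ)).trace.re

noncomputable def fidelity {n : Type*} [Fintype n] [DecidableEq n]
    (ρ σ : Matrix n n ℂ) : ℝ :=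
  (rootFidelity ρ σ) ^ 2

noncomputable def traceNorm {n : Type*} [Fintype n] [DecidableEq n] (A : Matrix n n ℂ) : ℝ :=
  (matSqrt (Aᴴ * A)).trace.re

/-- The set of attainable type-II error values in hypothesis testing. -/
def testValues {n : Type*} [Fintype n] [DecidableEq n] (ρ σ : Matrix n n ℂ) (ε : ℝ) :
    Set ℝ :=
  { x | ∃ Λ : Matrix n n ℂ, Λ.PosSemidef ∧ (1 - Λ).PosSemidef ∧
      1 - ε ≤ (Λ * ρ).trace.re ∧ x = (Λ * σ).trace.re }

/-- ε-hypothesis-testing relative entropy. -/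
noncomputable def Dh {n : Type*} [Fintype n] [DecidableEq n]
    (ρ σ : Matrix n n ℂ) (ε : ℝ) : ℝ :=
  - Real.logb 2 (sInf (testValues ρ σ ε))

/-- GHZ unit vector. -/
noncomputable def ghz (M K : ℕ) : (Fin M → Fin K) → ℂ :=
  fun f => if ∃ c, ∀ m, f m = c then ((Real.sqrt K : ℂ))⁻¹ else 0

/-- GHZ rank-one projection. -/
noncomputable def ghzProj (M K : ℕ) : Matrix (Fin M → Fin K) (Fin M → Fin K) ℂ :=
  Matrix.vecMulVec (ghz M K) (star ∘ ghz M K)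

/-- The twisting unitary. -/
def twist (M K d : ℕ)
    (U : (Fin M → Fin K) → Matrix (Fin M → Fin d) (Fin M → Fin d) ℂ) :
    Matrix ((Fin M → Fin K) × (Fin M → Fin d)) ((Fin M → Fin K) × (Fin M → Fin d)) ℂ :=
  Matrix.of fun p q => if p.1 = q.1 then U p.1 p.2 q.2 else 0

/-- The privacy test `Π = W (Φ ⊗ 1) Wᴴ`. -/
noncomputable def privacyTest (M K d : ℕ)
    (U : (Fin M → Fin K) → Matrix (Fin M → Fin d) (Fin M → Fin d) ℂ) :
    Matrix ((Fin M → Fin K) × (Fin M → Fin d)) ((Fin M → Fin K) × (Fin M → Fin d)) ℂ :=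
  twist M K d U * (ghzProj M K ⊗ₖ (1 : Matrix (Fin M → Fin d) (Fin M → Fin d) ℂ)) *
    (twist M K d U)ᴴ

/-- The private state `γ = W (Φ ⊗ ω) Wᴴ`. -/
noncomputable def privateState (M K d : ℕ)
    (U : (Fin M → Fin K) → Matrix (Fin M → Fin d) (Fin M → Fin d) ℂ)
    (ω : Matrix (Fin M → Fin d) (Fin M → Fin d) ℂ) :
    Matrix ((Fin M → Fin K) × (Fin M → Fin d)) ((Fin M → Fin K) × (Fin M → Fin d)) ℂ :=
  twist M K d U * (ghzProj M K ⊗ₖ ω) * (twist M K d U)ᴴ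

/-- A vector on `𝒦 × 𝒮` is product across the bipartition `J | Jᶜ` of the parties. -/
def IsProductAcross {M K d : ℕ} (J : Set (Fin M))
    (v : (Fin M → Fin K) × (Fin M → Fin d) → ℂ) : Prop :=
  ∃ (v₁ : ((↥J) → Fin K) × ((↥J) → Fin d) → ℂ)
    (v₂ : ((↥(Jᶜ)) → Fin K) × ((↥(Jᶜ)) → Fin d) → ℂ),
    ∀ (f : Fin M → Fin K) (x : Fin M → Fin d),
      v (f, x) = v₁ (fun m => f m.1, fun m => x m.1) * v₂ (fun m => f m.1, fun m => x m.1)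

/-- Biseparability: a finite convex combination of pure states, each product across
some nontrivial bipartition of the parties. -/
def Biseparable {M K d : ℕ}
    (σ : Matrix ((Fin M → Fin K) × (Fin M → Fin d))
      ((Fin M → Fin K) × (Fin M → Fin d)) ℂ) : Prop :=
  ∃ (N : ℕ) (p : Fin N → ℝ) (w : Fin N → ((Fin M → Fin K) × (Fin M → Fin d)) → ℂ)
    (J : Fin N → Set (Fin M)),
    (∀ t, 0 ≤ p t) ∧ (∑ t, p t = 1) ∧
    (∀ t, ∑ i, ‖w t i‖ ^ 2 = 1) ∧
    (∀ t, J t ≠ ∅ ∧ J t ≠ Set.univ ∧ IsProductAcross (J t) (w t)) ∧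
    σ = ∑ t, (p t : ℂ) • Matrix.vecMulVec (w t) (star ∘ w t)

/-- Partial trace over the second tensor factor. -/
noncomputable def partialTrace₂ {A B : Type*} [Fintype B] (τ : Matrix (A × B) (A × B) ℂ) :
    Matrix A A ℂ :=
  Matrix.of fun a a' => ∑ b, τ (a, b) (a', b)

/-- Matrix logarithm of a Hermitian matrix via the spectral functional calculus. -/
noncomputable def matLog {n : Type*} [Fintype n] [DecidableEq n] (A : Matrix n n ℂ) :
    Matrix n n ℂ :=
  if hA : A.IsHermitian then
    (hA.eigenvectorUnitary : Matrix n n ℂ) *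
      Matrix.diagonal (fun i => (Real.log (hA.eigenvalues i) : ℂ)) *
      (star hA.eigenvectorUnitary : Matrix n n ℂ)
  else 0

namespace Matrix.PosSemidef
variable {n : Type*} [Fintype n] [DecidableEq n]

noncomputable def sqrt {A : Matrix n n ℂ} (h : A.PosSemidef) : Matrix n n ℂ :=
  (h.1.eigenvectorUnitary : Matrix n n ℂ) *
    Matrix.diagonal (fun i => ((Real.sqrt (h.1.eigenvalues i) : ℝ) : ℂ)) *
    (star h.1.eigenvectorUnitary : Matrix n n ℂ)

lemma posSemidef_sqrt {A : Matrix n n ℂ} (h : A.PosSemidef) : h.sqrt.PosSemidef := by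
  have hd : (Matrix.diagonal (fun i => ((Real.sqrt (h.1.eigenvalues i) : ℝ) : ℂ))).PosSemidef :=
    Matrix.posSemidef_diagonal_iff.mpr fun i => by
      exact_mod_cast Real.sqrt_nonneg _
  have := hd.mul_mul_conjTranspose_same (h.1.eigenvectorUnitary : Matrix n n ℂ)
  unfold sqrt
  simpa [Matrix.star_eq_conjTranspose] using this

lemma sqrt_mul_self {A : Matrix n n ℂ} (h : A.PosSemidef) : h.sqrt * h.sqrt = A := by
  have hU : (star (h.1.eigenvectorUnitary : Matrix n n ℂ)) *
      (h.1.eigenvectorUnitary : Matrix n n ℂ) = 1 :=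
    (Matrix.mem_unitaryGroup_iff').mp (h.1.eigenvectorUnitary).2
  have e : Matrix.diagonal (fun i => ((Real.sqrt (h.1.eigenvalues i) : ℝ) : ℂ)) *
      Matrix.diagonal (fun i => ((Real.sqrt (h.1.eigenvalues i) : ℝ) : ℂ)) =
      Matrix.diagonal (fun i => ((h.1.eigenvalues i : ℝ) : ℂ)) := by
    rw [Matrix.diagonal_mul_diagonal]
    congr 1; funext i
    rw [← Complex.ofReal_mul, Real.mul_self_sqrt (h.eigenvalues_nonneg i)]
  have hs : A = (h.1.eigenvectorUnitary : Matrix n n ℂ) *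
      Matrix.diagonal (fun i => ((h.1.eigenvalues i : ℝ) : ℂ)) *
      (star (h.1.eigenvectorUnitary : Matrix n n ℂ)) := h.1.spectral_theorem
  unfold sqrt
  rw [show (star h.1.eigenvectorUnitary : Matrix n n ℂ) =
    star (h.1.eigenvectorUnitary : Matrix n n ℂ) from rfl]
  conv_rhs => rw [hs]
  simp only [mul_assoc]
  rw [← mul_assoc (star (h.1.eigenvectorUnitary : Matrix n n ℂ)), hU, one_mul,
    ← mul_assoc (Matrix.diagonal _), e]

end Matrix.PosSemidef

section Stmt4AuxSection
set_option linter.unusedSectionVars false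
namespace Stmt4Aux
variable {n : Type*} [Fintype n] [DecidableEq n]

lemma trace_nonneg' {A : Matrix n n ℂ} (hA : A.PosSemidef) : 0 ≤ A.trace := by
  exact hA.trace_nonneg

lemma trace_mul_nonneg' {A B : Matrix n n ℂ} (hA : A.PosSemidef) (hB : B.PosSemidef) :
    0 ≤ (A * B).trace := by
  have h1 : (A * B).trace = (hA.sqrt * B * hA.sqrt).trace := by
    conv_lhs => rw [← hA.sqrt_mul_self, mul_assoc, trace_mul_comm, mul_assoc, ← mul_assoc]
  have h2 : (hA.sqrt * B * hA.sqrt).PosSemidef := by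
    have := hB.conjTranspose_mul_mul_same hA.sqrt
    rwa [hA.posSemidef_sqrt.1.eq] at this
  rw [h1]; exact trace_nonneg' h2


lemma trace_conj_sum (A B : Matrix n n ℂ) :
    (Aᴴ * B).trace = ∑ p : n × n, (starRingEnd ℂ) (A p.1 p.2) * B p.1 p.2 := by
  rw [Fintype.sum_prod_type]
  simp only [Matrix.trace, Matrix.diag, Matrix.mul_apply, Matrix.conjTranspose_apply]
  rw [Finset.sum_comm]
  simp [Matrix.conjTranspose_apply, RingHom.comp_apply]

lemma trace_self_re (A : Matrix n n ℂ) :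
    (Aᴴ * A).trace.re = ∑ p : n × n, ‖A p.1 p.2‖ ^ 2 := by
  rw [trace_conj_sum]
  rw [Complex.re_sum]
  congr 1; ext p
  rw [mul_comm, Complex.mul_conj]
  norm_cast
  rw [Complex.normSq_eq_norm_sq]

lemma trace_cs (A B : Matrix n n ℂ) :
    ‖(Aᴴ * B).trace‖ ≤
      Real.sqrt ((Aᴴ * A).trace.re) * Real.sqrt ((Bᴴ * B).trace.re) := by
  let x : EuclideanSpace ℂ (n × n) := WithLp.toLp 2 (fun p : n × n => A p.1 p.2)
  let y : EuclideanSpace ℂ (n × n) := WithLp.toLp 2 (fun p : n × n => B p.1 p.2)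
  have hxy : (Aᴴ * B).trace = inner ℂ x y := by
    rw [trace_conj_sum]
    simp [PiLp.inner_apply, RCLike.inner_apply, x, y, mul_comm]
  have hx : Real.sqrt ((Aᴴ * A).trace.re) = ‖x‖ := by
    rw [trace_self_re, EuclideanSpace.norm_eq]
  have hy : Real.sqrt ((Bᴴ * B).trace.re) = ‖y‖ := by
    rw [trace_self_re, EuclideanSpace.norm_eq]
  rw [hxy, hx, hy]
  exact norm_inner_le_norm x y

noncomputable def Cfun {T : Matrix n n ℂ} (hT : T.PosSemidef) (f : ℝ → ℝ) : Matrix n n ℂ :=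
  (hT.1.eigenvectorUnitary : Matrix n n ℂ) *
    Matrix.diagonal (fun i => (f (hT.1.eigenvalues i) : ℂ)) *
    (star (hT.1.eigenvectorUnitary : Matrix n n ℂ))

variable {T : Matrix n n ℂ} (hT : T.PosSemidef)

lemma Cfun_mul (f g : ℝ → ℝ) :
    Cfun hT f * Cfun hT g = Cfun hT (fun x => f x * g x) := by
  unfold Cfun
  have h : (star (hT.1.eigenvectorUnitary : Matrix n n ℂ)) *
      (hT.1.eigenvectorUnitary : Matrix n n ℂ) = 1 :=
    (Matrix.mem_unitaryGroup_iff').mp (hT.1.eigenvectorUnitary).2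
  simp only [mul_assoc]
  rw [← mul_assoc (star (hT.1.eigenvectorUnitary : Matrix n n ℂ)), h, one_mul,
    ← mul_assoc (Matrix.diagonal _), Matrix.diagonal_mul_diagonal]
  push_cast
  rfl

lemma Cfun_herm (f : ℝ → ℝ) : (Cfun hT f)ᴴ = Cfun hT f := by
  simp [Cfun, Matrix.conjTranspose_mul, Matrix.diagonal_conjTranspose, Complex.conj_ofReal, Pi.star_def, Complex.star_def,
    mul_assoc, Matrix.star_eq_conjTranspose]

lemma Cfun_congr {f g : ℝ → ℝ} (h : ∀ i, f (hT.1.eigenvalues i) = g (hT.1.eigenvalues i)) :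
    Cfun hT f = Cfun hT g := by
  have h2 : (fun i => (f (hT.1.eigenvalues i) : ℂ)) = fun i => (g (hT.1.eigenvalues i) : ℂ) :=
    funext fun i => by rw [h i]
  unfold Cfun
  rw [h2]

lemma Cfun_sqrt : hT.sqrt = Cfun hT Real.sqrt := rfl

lemma Cfun_id : Cfun hT (fun x => x) = T := hT.1.spectral_theorem.symm


lemma core {n : Type*} [Fintype n] [DecidableEq n] {ρ σ : Matrix n n ℂ}
    (hρ : ρ.PosSemidef) (hρtr : ρ.trace = 1)
    (hσ : σ.PosSemidef) (hσtr : σ.trace = 1)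
    {Λ : Matrix n n ℂ} (hΛ : Λ.PosSemidef) (hΛ1 : (1 - Λ).PosSemidef) :
    rootFidelity ρ σ ≤
      Real.sqrt ((Λ * σ).trace.re) + Real.sqrt (1 - (Λ * ρ).trace.re) := by
  classical
  set sρ := hρ.sqrt with hsρdef
  set sσ := hσ.sqrt with hsσdef
  have hsρh : sρᴴ = sρ := hρ.posSemidef_sqrt.1
  have hsσh : sσᴴ = sσ := hσ.posSemidef_sqrt.1
  have hρs : sρ * sρ = ρ := hρ.sqrt_mul_self
  have hσs : sσ * sσ = σ := hσ.sqrt_mul_self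
  set M := sρ * sσ with hMdef
  have hT : (Mᴴ * M).PosSemidef := Matrix.posSemidef_conjTranspose_mul_self M
  have hMT : Mᴴ * M = sσ * ρ * sσ := by
    rw [hMdef, Matrix.conjTranspose_mul, hsρh, hsσh, mul_assoc, ← mul_assoc sρ, hρs,
      ← mul_assoc]
  have hrootF : rootFidelity ρ σ = (hT.sqrt).trace.re := by
    have h1 : matSqrt σ = sσ := dif_pos hσ
    rw [rootFidelity, h1, ← hMT, matSqrt, dif_pos hT]
    rfl
  -- functional calculus objects
  set hinv : ℝ → ℝ := fun x => if x = 0 then 0 else (Real.sqrt x)⁻¹ with hinvdef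
  set h2f : ℝ → ℝ := fun x => if x = 0 then 0 else x⁻¹ with h2fdef
  set W := Cfun hT hinv * Mᴴ with hWdef
  have hWM : W * M = hT.sqrt := by
    have h := Cfun_mul hT hinv (fun x => x)
    rw [Cfun_id] at h
    rw [hWdef, mul_assoc, h, Cfun_sqrt]
    apply Cfun_congr
    intro i
    have hnn := hT.eigenvalues_nonneg i
    by_cases h : hT.1.eigenvalues i = 0
    · simp [hinvdef, h]
    · have hpos : 0 < hT.1.eigenvalues i := lt_of_le_of_ne hnn (Ne.symm h)
      have hs : Real.sqrt (hT.1.eigenvalues i) ≠ 0 := by positivity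
      simp only [hinvdef, if_neg h]
      field_simp
      rw [Real.sq_sqrt hnn]
  have hWh : Wᴴ = M * Cfun hT hinv := by
    rw [hWdef, Matrix.conjTranspose_mul, Matrix.conjTranspose_conjTranspose, Cfun_herm]
  have hinv_sq : ∀ i, hinv (hT.1.eigenvalues i) * hinv (hT.1.eigenvalues i)
      = h2f (hT.1.eigenvalues i) := by
    intro i
    have hnn := hT.eigenvalues_nonneg i
    by_cases h : hT.1.eigenvalues i = 0
    · simp [hinvdef, h2fdef, h]
    · simp only [hinvdef, h2fdef, if_neg h]
      rw [← mul_inv, Real.mul_self_sqrt hnn]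
  have hR : Wᴴ * W = M * Cfun hT h2f * Mᴴ := by
    rw [hWh, hWdef, mul_assoc, ← mul_assoc (Cfun hT hinv), Cfun_mul, Cfun_congr hT hinv_sq,
      ← mul_assoc]
  have h2f_idem : ∀ i, (fun x => (fun x => h2f x * x) x * h2f x) (hT.1.eigenvalues i)
      = h2f (hT.1.eigenvalues i) := by
    intro i
    by_cases h : hT.1.eigenvalues i = 0 <;> simp [h2fdef, h]
  have hmid : Cfun hT h2f * (Mᴴ * M) * Cfun hT h2f = Cfun hT h2f := by
    have h := Cfun_mul hT h2f (fun x => x)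
    rw [Cfun_id] at h
    rw [h, Cfun_mul]
    exact Cfun_congr hT h2f_idem
  have hProj : (M * Cfun hT h2f * Mᴴ) * (M * Cfun hT h2f * Mᴴ) = M * Cfun hT h2f * Mᴴ := by
    calc (M * Cfun hT h2f * Mᴴ) * (M * Cfun hT h2f * Mᴴ)
        = M * (Cfun hT h2f * (Mᴴ * M) * Cfun hT h2f) * Mᴴ := by
          simp only [mul_assoc]
      _ = M * Cfun hT h2f * Mᴴ := by rw [hmid]
  have h1R : (1 - Wᴴ * W).PosSemidef := by
    have hherm : (Wᴴ * W)ᴴ = Wᴴ * W := by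
      rw [Matrix.conjTranspose_mul, Matrix.conjTranspose_conjTranspose]
    have hkey : (1 - Wᴴ * W)ᴴ * (1 - Wᴴ * W) = 1 - Wᴴ * W := by
      rw [Matrix.conjTranspose_sub, Matrix.conjTranspose_one, hherm, sub_mul, one_mul, mul_sub,
        mul_one, hR, hProj]
      abel
    rw [← hkey]
    exact Matrix.posSemidef_conjTranspose_mul_self _
  -- the generic term bound
  have hterm : ∀ Θ : Matrix n n ℂ, Θ.PosSemidef →
      ‖(W * sρ * Θ * sσ).trace‖ ≤
        Real.sqrt ((Θ * ρ).trace.re) * Real.sqrt ((Θ * σ).trace.re) := by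
    intro Θ hΘ
    set sΘ := hΘ.sqrt with hsΘdef
    have hΘh : sΘᴴ = sΘ := hΘ.posSemidef_sqrt.1
    have hΘs : sΘ * sΘ = Θ := hΘ.sqrt_mul_self
    set A := sΘ * sρ * Wᴴ with hAdef
    set B := sΘ * sσ with hBdef
    have hAH : Aᴴ = W * sρ * sΘ := by
      rw [hAdef, Matrix.conjTranspose_mul (sΘ * sρ) Wᴴ, Matrix.conjTranspose_conjTranspose,
        Matrix.conjTranspose_mul sΘ sρ, hsρh, hΘh, ← mul_assoc]
    have hAB : Aᴴ * B = W * sρ * Θ * sσ := by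
      rw [hAH, hBdef, ← hΘs]
      simp only [mul_assoc]
    have hAA : Aᴴ * A = W * (sρ * Θ * sρ) * Wᴴ := by
      rw [hAH, hAdef, ← hΘs]
      simp only [mul_assoc]
    have hXpsd : (sρ * Θ * sρ).PosSemidef := by
      have := hΘ.conjTranspose_mul_mul_same sρ
      rwa [hsρh] at this
    have hXtr : (sρ * Θ * sρ).trace = (Θ * ρ).trace := by
      rw [Matrix.trace_mul_cycle, hρs, Matrix.trace_mul_comm]
    have htr1 : (Aᴴ * A).trace = ((sρ * Θ * sρ) * (Wᴴ * W)).trace := by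
      rw [hAA, Matrix.trace_mul_cycle, Matrix.trace_mul_comm, mul_assoc]
    have hnn : 0 ≤ ((sρ * Θ * sρ) * (1 - Wᴴ * W)).trace := trace_mul_nonneg' hXpsd h1R
    have hsplit : ((sρ * Θ * sρ) * (1 - Wᴴ * W)).trace
        = (Θ * ρ).trace - ((sρ * Θ * sρ) * (Wᴴ * W)).trace := by
      rw [mul_sub, mul_one, Matrix.trace_sub, hXtr]
    have hA2 : (Aᴴ * A).trace.re ≤ (Θ * ρ).trace.re := by
      rw [htr1]
      have := (Complex.le_def.mp hnn).1
      rw [hsplit] at this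
      simp only [Complex.zero_re, Complex.sub_re] at this
      linarith
    have hBB : Bᴴ * B = sσ * Θ * sσ := by
      rw [hBdef, Matrix.conjTranspose_mul sΘ sσ, hΘh, hsσh, mul_assoc, ← mul_assoc sΘ, hΘs,
        ← mul_assoc]
    have hB2 : (Bᴴ * B).trace = (Θ * σ).trace := by
      rw [hBB, Matrix.trace_mul_cycle, hσs, Matrix.trace_mul_comm]
    calc ‖(W * sρ * Θ * sσ).trace‖
        = ‖(Aᴴ * B).trace‖ := by rw [hAB]
      _ ≤ Real.sqrt ((Aᴴ * A).trace.re) * Real.sqrt ((Bᴴ * B).trace.re) := trace_cs A B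
      _ ≤ Real.sqrt ((Θ * ρ).trace.re) * Real.sqrt ((Θ * σ).trace.re) := by
          rw [hB2]
          exact mul_le_mul_of_nonneg_right (Real.sqrt_le_sqrt hA2) (Real.sqrt_nonneg _)
  -- trace splitting
  have hsplitWM : (W * M).trace = (W * sρ * Λ * sσ).trace + (W * sρ * (1 - Λ) * sσ).trace := by
    have h : W * sρ * Λ * sσ + W * sρ * (1 - Λ) * sσ = W * M := by
      rw [hMdef]
      noncomm_ring
    rw [← h, Matrix.trace_add]
  -- p q facts
  set p := (Λ * ρ).trace.re with hpdef
  set q := (Λ * σ).trace.re with hqdef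
  have hp0 : 0 ≤ p := by
    have := (Complex.le_def.mp (trace_mul_nonneg' hΛ hρ)).1
    simpa using this
  have hq0 : 0 ≤ q := by
    have := (Complex.le_def.mp (trace_mul_nonneg' hΛ hσ)).1
    simpa using this
  have h1p : ((1 - Λ) * ρ).trace.re = 1 - p := by
    rw [sub_mul, one_mul, Matrix.trace_sub]
    simp [hρtr]
    rfl
  have h1q : ((1 - Λ) * σ).trace.re = 1 - q := by
    rw [sub_mul, one_mul, Matrix.trace_sub]
    simp [hσtr]
    rfl
  have hp1 : p ≤ 1 := by
    have := (Complex.le_def.mp (trace_mul_nonneg' hΛ1 hρ)).1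
    rw [sub_mul, one_mul, Matrix.trace_sub] at this
    simp [hρtr] at this
    linarith
  have hq1 : q ≤ 1 := by
    have := (Complex.le_def.mp (trace_mul_nonneg' hΛ1 hσ)).1
    rw [sub_mul, one_mul, Matrix.trace_sub] at this
    simp [hσtr] at this
    linarith
  -- final chain
  have hbound1 : ‖(W * sρ * Λ * sσ).trace‖ ≤ Real.sqrt q := by
    refine le_trans (hterm Λ hΛ) ?_
    calc Real.sqrt p * Real.sqrt q ≤ 1 * Real.sqrt q := by
          exact mul_le_mul_of_nonneg_right (Real.sqrt_le_one.mpr hp1) (Real.sqrt_nonneg _)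
      _ = Real.sqrt q := one_mul _
  have hbound2 : ‖(W * sρ * (1 - Λ) * sσ).trace‖ ≤ Real.sqrt (1 - p) := by
    refine le_trans (hterm (1 - Λ) hΛ1) ?_
    rw [h1p, h1q]
    calc Real.sqrt (1 - p) * Real.sqrt (1 - q) ≤ Real.sqrt (1 - p) * 1 := by
          exact mul_le_mul_of_nonneg_left (Real.sqrt_le_one.mpr (by linarith)) (Real.sqrt_nonneg _)
      _ = Real.sqrt (1 - p) := mul_one _
  calc rootFidelity ρ σ = (hT.sqrt).trace.re := hrootF
    _ = ((W * M).trace).re := by rw [hWM]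
    _ ≤ ‖(W * M).trace‖ := Complex.re_le_norm _
    _ ≤ ‖(W * sρ * Λ * sσ).trace‖ + ‖(W * sρ * (1 - Λ) * sσ).trace‖ := by
        rw [hsplitWM]
        exact norm_add_le _ _
    _ ≤ Real.sqrt q + Real.sqrt (1 - p) := add_le_add hbound1 hbound2

end Stmt4Aux
end Stmt4AuxSection

/-- `D_h^ε(ρ‖σ) ≤ −2 log₂(√F(ρ,σ) − √ε)`, equivalently every test `Λ`
with `Re Tr[Λρ] ≥ 1 − ε` satisfies `Re Tr[Λσ] ≥ (√F(ρ,σ) − √ε)²`. -/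
theorem stmt_4 (n : ℕ) (ρ σ : Matrix (Fin n) (Fin n) ℂ)
    (hρ : ρ.PosSemidef) (hρtr : ρ.trace = 1)
    (hσ : σ.PosSemidef) (hσtr : σ.trace = 1)
    (ε : ℝ) (hε0 : 0 ≤ ε) (hε1 : ε ≤ 1) (hlt : Real.sqrt ε < rootFidelity ρ σ) :
    Dh ρ σ ε ≤ -2 * Real.logb 2 (rootFidelity ρ σ - Real.sqrt ε) ∧
    ∀ Λ : Matrix (Fin n) (Fin n) ℂ, Λ.PosSemidef → (1 - Λ).PosSemidef →
      1 - ε ≤ (Λ * ρ).trace.re →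
      (rootFidelity ρ σ - Real.sqrt ε) ^ 2 ≤ (Λ * σ).trace.re := by
  
  have key : ∀ Λ : Matrix (Fin n) (Fin n) ℂ, Λ.PosSemidef → (1 - Λ).PosSemidef →
      1 - ε ≤ (Λ * ρ).trace.re →
      (rootFidelity ρ σ - Real.sqrt ε) ^ 2 ≤ (Λ * σ).trace.re := by
    intro Λ hΛ hΛ1 hΛρ
    have hcore := Stmt4Aux.core hρ hρtr hσ hσtr hΛ hΛ1
    have hq0 : 0 ≤ (Λ * σ).trace.re := by
      have := (Complex.le_def.mp (Stmt4Aux.trace_mul_nonneg' hΛ hσ)).1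
      simpa using this
    have h1p : 1 - (Λ * ρ).trace.re ≤ ε := by linarith
    have hsq : Real.sqrt (1 - (Λ * ρ).trace.re) ≤ Real.sqrt ε := Real.sqrt_le_sqrt h1p
    have h2 : rootFidelity ρ σ - Real.sqrt ε ≤ Real.sqrt ((Λ * σ).trace.re) := by
      linarith
    have h3 : 0 ≤ rootFidelity ρ σ - Real.sqrt ε := by linarith [le_of_lt hlt]
    calc (rootFidelity ρ σ - Real.sqrt ε) ^ 2 ≤ (Real.sqrt ((Λ * σ).trace.re)) ^ 2 :=
          pow_le_pow_left₀ h3 h2 2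
      _ = (Λ * σ).trace.re := Real.sq_sqrt hq0
  refine ⟨?_, key⟩
  have hc0 : 0 < rootFidelity ρ σ - Real.sqrt ε := sub_pos.mpr hlt
  have hmem : (1 : ℝ) ∈ testValues ρ σ ε := by
    refine ⟨1, Matrix.PosSemidef.one, by simpa using (Matrix.PosSemidef.zero (n := Fin n)), ?_, ?_⟩
    · rw [one_mul, hρtr]; norm_num; linarith
    · rw [one_mul, hσtr]; norm_num
  have hlb : ∀ x ∈ testValues ρ σ ε, (rootFidelity ρ σ - Real.sqrt ε) ^ 2 ≤ x := by
    rintro x ⟨Λ, h1, h2, h3, rfl⟩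
    exact key Λ h1 h2 h3
  have hinf : (rootFidelity ρ σ - Real.sqrt ε) ^ 2 ≤ sInf (testValues ρ σ ε) :=
    le_csInf ⟨1, hmem⟩ hlb
  have hpos : (0 : ℝ) < (rootFidelity ρ σ - Real.sqrt ε) ^ 2 := by positivity
  have hlog : Real.logb 2 ((rootFidelity ρ σ - Real.sqrt ε) ^ 2)
      ≤ Real.logb 2 (sInf (testValues ρ σ ε)) :=
    Real.logb_le_logb_of_le (by norm_num) hpos hinf
  rw [Dh]
  have h2log : Real.logb 2 ((rootFidelity ρ σ - Real.sqrt ε) ^ 2)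
      = 2 * Real.logb 2 (rootFidelity ρ σ - Real.sqrt ε) := by
    rw [Real.logb_pow]; norm_num
  linarith
end

section
/- Let ρ and σ be density matrices on Fin n and let ε ∈ [0, 1 − ½‖ρ − σ‖₁). Then D_h^ε(ρ‖σ) ≤ −log₂ (1 − ½‖ρ − σ‖₁ − ε). Equivalently, every test Λ with Re Tr[Λ·ρ] ≥ 1 − ε satisfies Re Tr[Λ·σ] ≥ 1 − ½‖ρ − σ‖₁ − ε. -/
open Matrix Kronecker
open scoped ComplexOrder

/-- `D_h^ε(ρ‖σ) ≤ −log₂(1 − ½‖ρ−σ‖₁ − ε)`, equivalently every test `Λ`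
with `Re Tr[Λρ] ≥ 1 − ε` satisfies `Re Tr[Λσ] ≥ 1 − ½‖ρ−σ‖₁ − ε`. -/
theorem stmt_7 (n : ℕ) (ρ σ : Matrix (Fin n) (Fin n) ℂ)
    (hρ : ρ.PosSemidef) (hρtr : ρ.trace = 1)
    (hσ : σ.PosSemidef) (hσtr : σ.trace = 1)
    (ε : ℝ) (hε0 : 0 ≤ ε) (hε1 : ε < 1 - traceNorm (ρ - σ) / 2) :
    Dh ρ σ ε ≤ - Real.logb 2 (1 - traceNorm (ρ - σ) / 2 - ε) ∧
    ∀ Λ : Matrix (Fin n) (Fin n) ℂ, Λ.PosSemidef → (1 - Λ).PosSemidef →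
      1 - ε ≤ (Λ * ρ).trace.re →
      1 - traceNorm (ρ - σ) / 2 - ε ≤ (Λ * σ).trace.re := by
  have key : ∀ Λ : Matrix (Fin n) (Fin n) ℂ, Λ.PosSemidef → (1 - Λ).PosSemidef →
      1 - ε ≤ (Λ * ρ).trace.re →
      1 - traceNorm (ρ - σ) / 2 - ε ≤ (Λ * σ).trace.re := by
    intro Λ hΛ hΛ1 hΛρ
    set A := ρ - σ with hAdef
    have hA : A.IsHermitian := hρ.1.sub hσ.1
    set U : Matrix (Fin n) (Fin n) ℂ := (hA.eigenvectorUnitary : Matrix (Fin n) (Fin n) ℂ)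
      with hU
    set e : Fin n → ℝ := hA.eigenvalues with he
    have hUU : star U * U = 1 := Matrix.mem_unitaryGroup_iff'.mp hA.eigenvectorUnitary.2
    -- conjugation helper
    set C : (Fin n → ℝ) → Matrix (Fin n) (Fin n) ℂ :=
      fun f => U * Matrix.diagonal (fun i => (f i : ℂ)) * star U with hC
    have hCpsd : ∀ f : Fin n → ℝ, (∀ i, 0 ≤ f i) → (C f).PosSemidef := by
      intro f hf
      have hd : (Matrix.diagonal (fun i => (f i : ℂ))).PosSemidef :=
        Matrix.posSemidef_diagonal_iff.mpr fun i => by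
          simpa using Complex.zero_le_real.mpr (hf i)
      simpa [hC, Matrix.star_eq_conjTranspose] using hd.mul_mul_conjTranspose_same U
    have hCtr : ∀ f : Fin n → ℝ, (C f).trace.re = ∑ i, f i := by
      intro f
      have : (C f).trace = (Matrix.diagonal (fun i => (f i : ℂ))).trace := by
        rw [hC]
        rw [Matrix.trace_mul_cycle, hUU, Matrix.one_mul]
      rw [this, Matrix.trace_diagonal, Complex.re_sum]
      simp
    have hCsub : ∀ f g : Fin n → ℝ, C f - C g = C (f - g) := by
      intro f g
      have hd : (Matrix.diagonal (fun i => (f i : ℂ)) - Matrix.diagonal (fun i => (g i : ℂ)))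
          = Matrix.diagonal (fun i => ((f - g) i : ℂ)) := by
        rw [Matrix.diagonal_sub]
        congr 1
        funext i
        simp
      simp only [hC, ← Matrix.sub_mul, ← Matrix.mul_sub, hd]
    have hspec : A = C e := hA.spectral_theorem
    -- positive and negative parts
    set fp : Fin n → ℝ := fun i => max (e i) 0 with hfp
    set fn : Fin n → ℝ := fun i => max (-(e i)) 0 with hfn
    have hfpe : fp - fn = e := by
      funext i
      simp only [Pi.sub_apply, hfp, hfn]
      exact max_zero_sub_max_neg_zero_eq_self (e i)
    have hPN : C fp - C fn = A := by rw [hCsub, hfpe, hspec]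
    -- trace norm computation
    have hCmul : ∀ f g : Fin n → ℝ, C f * C g = C (fun i => f i * g i) := by
      intro f g
      simp only [hC, Matrix.mul_assoc]
      rw [← Matrix.mul_assoc (star U) U, hUU, Matrix.one_mul,
        ← Matrix.mul_assoc (Matrix.diagonal _) (Matrix.diagonal _),
        Matrix.diagonal_mul_diagonal]
      congr 2
      funext i
      push_cast
      ring
    have habsf : (fun i => |e i| * |e i|) = (fun i => e i * e i) := by
      funext i; rw [abs_mul_abs_self]
    have hCmulabs : C (fun i => |e i|) * C (fun i => |e i|) = C (fun i => e i * e i) := by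
      rw [hCmul, habsf]
    have hAHA : Aᴴ * A = C (fun i => |e i|) * C (fun i => |e i|) := by
      rw [hA.eq, hCmulabs]
      conv_lhs => rw [hspec]
      rw [hCmul]
    have hpsdAHA : (Aᴴ * A).PosSemidef := Matrix.posSemidef_conjTranspose_mul_self A
    have habs_psd : (C (fun i => |e i|)).PosSemidef := hCpsd _ fun i => abs_nonneg _
    have hsqrt : matSqrt (Aᴴ * A) = C (fun i => |e i|) := by
      open MatrixOrder in
      have hm : matSqrt (Aᴴ * A) = CFC.sqrt (Aᴴ * A) := by
        rw [matSqrt, dif_pos hpsdAHA, CFC.sqrt_eq_real_sqrt _ hpsdAHA.nonneg,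
          cfcₙ_eq_cfc (hf := Real.continuous_sqrt.continuousOn) (hf0 := Real.sqrt_zero),
          hpsdAHA.1.cfc_eq, IsHermitian.cfc, Unitary.conjStarAlgAut_apply]
        rfl
      open MatrixOrder in
      rw [hm]
      open MatrixOrder in
      exact CFC.sqrt_unique hAHA.symm habs_psd.nonneg
    have hTN : traceNorm A = ∑ i, |e i| := by
      rw [traceNorm, hsqrt, hCtr]
    -- trace of A is zero
    have htrA : A.trace = 0 := by
      rw [hAdef, Matrix.trace_sub, hρtr, hσtr, sub_self]
    have hsum_e : ∑ i, e i = 0 := by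
      have := hCtr e
      rw [← hspec, htrA] at this
      simpa using this.symm
    have hsum_split : ∑ i, fp i = traceNorm A / 2 := by
      have h1 : ∑ i, fp i + ∑ i, fn i = ∑ i, |e i| := by
        rw [← Finset.sum_add_distrib]
        exact Finset.sum_congr rfl fun i _ => max_zero_add_max_neg_zero_eq_abs_self (e i)
      have h2 : ∑ i, fp i - ∑ i, fn i = 0 := by
        rw [← Finset.sum_sub_distrib, ← hsum_e]
        exact Finset.sum_congr rfl fun i _ => max_zero_sub_max_neg_zero_eq_self (e i)
      rw [hTN]; linarith
    -- trace positivity lemmas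
    have trace_re_nonneg : ∀ M : Matrix (Fin n) (Fin n) ℂ, M.PosSemidef → 0 ≤ M.trace.re := by
      intro M hM
      rw [Matrix.trace, Complex.re_sum]
      refine Finset.sum_nonneg fun i _ => ?_
      have h := hM.re_dotProduct_nonneg (Pi.single i 1)
      simpa [Matrix.mulVec_single, dotProduct, Pi.single_apply, apply_ite,
        Finset.sum_ite_eq'] using h
    have trace_mul_re_nonneg : ∀ X Y : Matrix (Fin n) (Fin n) ℂ,
        X.PosSemidef → Y.PosSemidef → 0 ≤ (X * Y).trace.re := by
      intro X Y hX hY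
      open MatrixOrder in
      have h1 : (X * Y).trace = (CFC.sqrt X * Y * CFC.sqrt X).trace := by
        rw [Matrix.trace_mul_cycle, CFC.sqrt_mul_sqrt_self X hX.nonneg]
      open MatrixOrder in
      have h2 : (CFC.sqrt X * Y * CFC.sqrt X).PosSemidef := by
        have := hY.conjTranspose_mul_mul_same (CFC.sqrt X)
        rwa [(CFC.sqrt_nonneg X).posSemidef.1.eq] at this
      rw [h1]
      exact trace_re_nonneg _ h2
    -- the main inequality
    have hP : (C fp).PosSemidef := hCpsd _ fun i => le_max_right _ _
    have hN : (C fn).PosSemidef := hCpsd _ fun i => le_max_right _ _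
    have hΛN : 0 ≤ (Λ * C fn).trace.re := trace_mul_re_nonneg _ _ hΛ hN
    have hΛP : (Λ * C fp).trace.re ≤ traceNorm A / 2 := by
      have h0 : 0 ≤ ((1 - Λ) * C fp).trace.re := trace_mul_re_nonneg _ _ hΛ1 hP
      have hexp : ((1 - Λ) * C fp).trace.re = (C fp).trace.re - (Λ * C fp).trace.re := by
        rw [Matrix.sub_mul, Matrix.one_mul, Matrix.trace_sub, Complex.sub_re]
      rw [hexp, hCtr] at h0
      linarith [hsum_split]
    have hΛA : (Λ * A).trace.re ≤ traceNorm A / 2 := by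
      have : Λ * A = Λ * C fp - Λ * C fn := by rw [← Matrix.mul_sub, hPN]
      rw [this, Matrix.trace_sub, Complex.sub_re]
      linarith
    have hΛσ : (Λ * σ).trace.re = (Λ * ρ).trace.re - (Λ * A).trace.re := by
      have : Λ * σ = Λ * ρ - Λ * A := by rw [← Matrix.mul_sub, hAdef, sub_sub_cancel]
      rw [this, Matrix.trace_sub, Complex.sub_re]
    rw [hΛσ]
    linarith
  refine ⟨?_, key⟩
  -- bound on Dh
  set c : ℝ := 1 - traceNorm (ρ - σ) / 2 - ε with hc
  have hcpos : 0 < c := by rw [hc]; linarith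
  have hne : (testValues ρ σ ε).Nonempty := by
    refine ⟨1, 1, Matrix.PosSemidef.one, ?_, ?_, ?_⟩
    · simpa using (Matrix.PosSemidef.zero (n := Fin n) (R := ℂ))
    · rw [Matrix.one_mul, hρtr]; simpa using hε0
    · rw [Matrix.one_mul, hσtr]; simp
  have hlb : c ≤ sInf (testValues ρ σ ε) := by
    refine le_csInf hne ?_
    rintro x ⟨Λ, h1, h2, h3, rfl⟩
    exact key Λ h1 h2 h3
  rw [Dh, hc] at *
  have := Real.logb_le_logb_of_le (b := 2) one_lt_two hcpos hlb
  linarith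
end

section
/- Let ρ and σ be density matrices on Fin n and let Λ be a test. Then Re Tr[Λ · (ρ − σ)] ≤ ½‖ρ − σ‖₁. -/
open Matrix Kronecker
open scoped ComplexOrder

section aux

variable {n : Type*} [Fintype n] [DecidableEq n]

lemma diag_re_nonneg {M : Matrix n n ℂ} (hM : M.PosSemidef) (i : n) : 0 ≤ (M i i).re := by
  have := hM.re_dotProduct_nonneg (Pi.single i 1)
  simpa [dotProduct, mulVec, Pi.single_apply, Finset.sum_ite_eq] using this

lemma star_mul_self_unitary {A : Matrix n n ℂ} (hA : A.IsHermitian) :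
    (star (hA.eigenvectorUnitary : Matrix n n ℂ)) * (hA.eigenvectorUnitary : Matrix n n ℂ) = 1 :=
  hA.eigenvectorUnitary.2.1

lemma conj_mul_conj {A : Matrix n n ℂ} (hA : A.IsHermitian) (D E : Matrix n n ℂ) :
    ((hA.eigenvectorUnitary : Matrix n n ℂ) * D * star (hA.eigenvectorUnitary : Matrix n n ℂ)) *
      ((hA.eigenvectorUnitary : Matrix n n ℂ) * E * star (hA.eigenvectorUnitary : Matrix n n ℂ))
    = (hA.eigenvectorUnitary : Matrix n n ℂ) * (D * E) *
      star (hA.eigenvectorUnitary : Matrix n n ℂ) := by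
  set U : Matrix n n ℂ := (hA.eigenvectorUnitary : Matrix n n ℂ)
  calc (U * D * star U) * (U * E * star U)
      = U * (D * ((star U * U) * (E * star U))) := by simp only [Matrix.mul_assoc]
    _ = U * (D * E) * star U := by
        rw [star_mul_self_unitary hA, Matrix.one_mul]
        simp only [Matrix.mul_assoc]

lemma trace_conj {A : Matrix n n ℂ} (hA : A.IsHermitian) (D : Matrix n n ℂ) :
    ((hA.eigenvectorUnitary : Matrix n n ℂ) * D *
      star (hA.eigenvectorUnitary : Matrix n n ℂ)).trace = D.trace := by
  rw [Matrix.trace_mul_cycle, star_mul_self_unitary hA, Matrix.one_mul]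

open scoped MatrixOrder in
lemma traceNorm_hermitian {A : Matrix n n ℂ} (hA : A.IsHermitian) :
    traceNorm A = ∑ i, |hA.eigenvalues i| := by
  set U : Matrix n n ℂ := (hA.eigenvectorUnitary : Matrix n n ℂ) with hU
  set B : Matrix n n ℂ := U * diagonal (fun i => ((|hA.eigenvalues i| : ℝ) : ℂ)) * star U
    with hBdef
  have hPSD : (Aᴴ * A).PosSemidef := posSemidef_conjTranspose_mul_self A
  have hB : B.PosSemidef := by
    refine (Matrix.PosSemidef.diagonal ?_).mul_mul_conjTranspose_same U
    intro i
    simp only [Pi.zero_apply]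
    rw [Complex.zero_le_real]
    exact abs_nonneg _
  have hB2 : B ^ 2 = Aᴴ * A := by
    rw [hA.eq]
    conv_rhs => rw [hA.spectral_theorem, Unitary.conjStarAlgAut_apply]
    rw [pow_two, hBdef, ← hU, conj_mul_conj hA, conj_mul_conj hA, diagonal_mul_diagonal,
      diagonal_mul_diagonal]
    congr 2
    ext i j
    rcases eq_or_ne i j with rfl | h
    · rw [diagonal_apply_eq, diagonal_apply_eq, ← Complex.ofReal_mul, abs_mul_abs_self]
      simp [RCLike.ofReal, Complex.ofReal_mul]
    · rw [diagonal_apply_ne _ h, diagonal_apply_ne _ h]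
  have hsq : matSqrt (Aᴴ * A) = B := by
    rw [matSqrt, dif_pos hPSD]
    have h1 : CFC.sqrt (Aᴴ * A) = B := by
      exact CFC.sqrt_unique ((pow_two B).symm.trans hB2) hB.nonneg
    rw [← h1, CFC.sqrt_eq_cfc, cfc_nnreal_eq_real _ _ hPSD.nonneg, hPSD.1.cfc_eq,
      IsHermitian.cfc, Unitary.conjStarAlgAut_apply]
    congr 2
    funext i
    ext j
    simp only [diagonal_apply, Function.comp_apply]
    split_ifs with h <;> simp [max_eq_left (hPSD.eigenvalues_nonneg i)]
  have htr : B.trace = ∑ i, ((|hA.eigenvalues i| : ℝ) : ℂ) := by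
    rw [hBdef, trace_conj hA, trace_diagonal]
  rw [traceNorm, hsq, htr, ← Complex.ofReal_sum, Complex.ofReal_re]

lemma trace_eq_sum_eigenvalues {A : Matrix n n ℂ} (hA : A.IsHermitian) :
    A.trace = ∑ i, (hA.eigenvalues i : ℂ) := by
  conv_lhs => rw [hA.spectral_theorem, Unitary.conjStarAlgAut_apply]
  rw [trace_conj hA, trace_diagonal]
  rfl

end aux

/-- for any test `Λ` and density matrices `ρ, σ`,
`Re Tr[Λ(ρ − σ)] ≤ ½‖ρ − σ‖₁`. -/
theorem stmt_8 (n : ℕ) (ρ σ : Matrix (Fin n) (Fin n) ℂ)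
    (hρ : ρ.PosSemidef) (hρtr : ρ.trace = 1)
    (hσ : σ.PosSemidef) (hσtr : σ.trace = 1)
    (Λ : Matrix (Fin n) (Fin n) ℂ) (hΛ : Λ.PosSemidef) (hΛ' : (1 - Λ).PosSemidef) :
    (Λ * (ρ - σ)).trace.re ≤ traceNorm (ρ - σ) / 2 := by
  set A : Matrix (Fin n) (Fin n) ℂ := ρ - σ with hAdef
  have hA : A.IsHermitian := hρ.1.sub hσ.1
  set U : Matrix (Fin n) (Fin n) ℂ := (hA.eigenvectorUnitary : Matrix (Fin n) (Fin n) ℂ)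
    with hU
  set lam := hA.eigenvalues with hlam
  -- sum of eigenvalues is zero
  have htrA : A.trace = 0 := by
    rw [hAdef, Matrix.trace_sub, hρtr, hσtr, sub_self]
  have hsum : ∑ i, lam i = 0 := by
    have := trace_eq_sum_eigenvalues hA
    rw [htrA] at this
    have h2 : ((∑ i, lam i : ℝ) : ℂ) = 0 := by
      rw [Complex.ofReal_sum]; exact this.symm
    exact_mod_cast h2
  -- the conjugated test
  set M : Matrix (Fin n) (Fin n) ℂ := star U * Λ * U with hM
  have hMpsd : M.PosSemidef := by
    have := hΛ.conjTranspose_mul_mul_same U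
    simpa [hM, star] using this
  have hM1psd : (1 - M).PosSemidef := by
    have := hΛ'.conjTranspose_mul_mul_same U
    have e : Uᴴ * (1 - Λ) * U = 1 - M := by
      rw [Matrix.mul_sub, Matrix.mul_one, Matrix.sub_mul, hM]
      congr 1
      exact star_mul_self_unitary hA
    rwa [e] at this
  -- trace formula
  have htrace : (Λ * A).trace = ∑ i, M i i * (lam i : ℂ) := by
    conv_lhs => rw [hA.spectral_theorem, Unitary.conjStarAlgAut_apply]
    rw [show Λ * (U * diagonal (RCLike.ofReal ∘ lam) * star U)
        = Λ * U * diagonal (RCLike.ofReal ∘ lam) * star U by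
      simp only [Matrix.mul_assoc]]
    rw [Matrix.trace_mul_cycle]
    rw [show star U * (Λ * U) = M by rw [hM, Matrix.mul_assoc]]
    rw [Matrix.trace]
    congr 1
    ext i
    rw [Matrix.diag_apply, Matrix.mul_diagonal]
    rfl
  have hre : (Λ * A).trace.re = ∑ i, (M i i).re * lam i := by
    rw [htrace, Complex.re_sum]
    congr 1
    ext i
    rw [Complex.mul_re, Complex.ofReal_re, Complex.ofReal_im, mul_zero, sub_zero]
  -- bounds on diagonal entries
  have hc0 : ∀ i, 0 ≤ (M i i).re := fun i => diag_re_nonneg hMpsd i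
  have hc1 : ∀ i, (M i i).re ≤ 1 := by
    intro i
    have := diag_re_nonneg hM1psd i
    simp only [Matrix.sub_apply, Matrix.one_apply_eq, Complex.sub_re, Complex.one_re] at this
    linarith
  -- final bound
  rw [hre, traceNorm_hermitian hA]
  have key : ∀ i, (M i i).re * lam i ≤ (|lam i| + lam i) / 2 := by
    intro i
    rcases le_or_gt 0 (lam i) with h | h
    · rw [abs_of_nonneg h]
      nlinarith [hc0 i, hc1 i]
    · rw [abs_of_neg h]
      nlinarith [hc0 i, hc1 i]
  calc ∑ i, (M i i).re * lam i ≤ ∑ i, (|lam i| + lam i) / 2 :=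
        Finset.sum_le_sum fun i _ => key i
    _ = (∑ i, |lam i|) / 2 := by
        rw [← Finset.sum_div, Finset.sum_add_distrib, hsum, add_zero]
end

section
/- Let N : Matrix n n ℂ →ₗ[ℂ] Matrix m m ℂ be a positive linear map, i.e. N maps every positive semidefinite matrix to a positive semidefinite matrix. Let ρ and σ' be density matrices on Fin n, let σ be a density matrix on Fin m, and let a, b ∈ ℝ. If 2^a • σ' − ρ is positive semidefinite and 2^b • σ − N(σ') is positive semidefinite, then 2^(a+b) • σ − N(ρ) is positive semidefinite. (This is the data-processed triangle inequality D_max(N(ρ)‖σ) ≤ D_max(ρ‖σ') + D_max(N(σ')‖σ) for the max-relative entropy, stated in Loewner-order form.) -/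
open Matrix Kronecker
open scoped ComplexOrder

theorem psd_real_smul {m : ℕ} (A : Matrix (Fin m) (Fin m) ℂ) (h : A.PosSemidef)
    (c : ℝ) (hc : 0 ≤ c) : ((c : ℂ) • A).PosSemidef := by
  constructor
  · simp [Matrix.IsHermitian, Matrix.conjTranspose_smul, h.1.eq, Complex.star_def,
      Complex.conj_ofReal]
  · intro x
    exact (h.smul (a := (c : ℂ)) (by exact_mod_cast hc)).2 x

theorem real_smul_eq_coe_smul {k : ℕ} (c : ℝ) (A : Matrix (Fin k) (Fin k) ℂ) :
    c • A = (c : ℂ) • A := by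
  ext i j; simp

/-- the data-processed triangle inequality
`D_max(N(ρ)‖σ) ≤ D_max(ρ‖σ') + D_max(N(σ')‖σ)` in Loewner-order form. -/
theorem stmt_10 (n m : ℕ)
    (N : Matrix (Fin n) (Fin n) ℂ →ₗ[ℂ] Matrix (Fin m) (Fin m) ℂ)
    (hN : ∀ A : Matrix (Fin n) (Fin n) ℂ, A.PosSemidef → (N A).PosSemidef)
    (ρ σ' : Matrix (Fin n) (Fin n) ℂ)
    (hρ : ρ.PosSemidef) (hρtr : ρ.trace = 1)
    (hσ' : σ'.PosSemidef) (hσ'tr : σ'.trace = 1)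
    (σ : Matrix (Fin m) (Fin m) ℂ) (hσ : σ.PosSemidef) (hσtr : σ.trace = 1)
    (a b : ℝ)
    (h1 : ((2 : ℝ) ^ a • σ' - ρ).PosSemidef)
    (h2 : ((2 : ℝ) ^ b • σ - N σ').PosSemidef) :
    ((2 : ℝ) ^ (a + b) • σ - N ρ).PosSemidef := by
  have key := (hN _ h1).add
    (psd_real_smul _ h2 ((2:ℝ)^a) (by positivity))
  convert key using 1
  rw [map_sub, real_smul_eq_coe_smul ((2:ℝ)^a) σ', N.map_smul,
    real_smul_eq_coe_smul ((2:ℝ)^b) σ,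
    real_smul_eq_coe_smul ((2:ℝ)^(a+b)) σ, Real.rpow_add (by norm_num)]
  push_cast
  module
end
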